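/- Let X be a connected, locally compact, non-compact metric space whose one-point compactification X̂ = X ∪ {∞} is metrizable. Define two points of X to be equivalent if they lie in a common compact connected subset of X, and call the equivalence classes the compactly connected components. Then for every compactly connected component E of X, the point ∞ lies in the closure of E in X̂. -/

import Mathlib

open Set

lemma exists_isClopen_disjoint_of_closed {Y : Type*} [TopologicalSpace Y] [T2Space Y]
    [CompactSpace Y] (x : Y) {F : Set Y} (hF : IsClosed F)
    (hd : Disjoint (connectedComponent x) F) :
    ∃ A : Set Y, IsClopen A ∧ x ∈ A ∧ Disjoint A F := by
  let N := { s : Set Y // IsClopen s ∧ x ∈ s }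
  haveI : Nonempty N := ⟨⟨univ, isClopen_univ, mem_univ x⟩⟩
  have hdir : Directed (· ⊇ ·) fun s : N => s.val := by
    rintro ⟨s, hs, hxs⟩ ⟨t, ht, hxt⟩
    exact ⟨⟨s ∩ t, hs.inter ht, ⟨hxs, hxt⟩⟩, inter_subset_left, inter_subset_right⟩
  have h_nhd : ∀ y ∈ ⋂ s : N, s.val, Fᶜ ∈ nhds y := by
    intro y hy
    rw [← connectedComponent_eq_iInter_isClopen] at hy
    exact hF.isOpen_compl.mem_nhds (disjoint_left.1 hd hy)
  obtain ⟨s, hs⟩ := exists_subset_nhds_of_compactSpace hdir (fun s => s.2.1.1) h_nhd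
  exact ⟨s.val, s.2.1, s.2.2, disjoint_compl_left.mono_left hs⟩

/-- Let `X` be a connected, locally compact, non-compact metric space
whose one-point compactification `X ∪ {∞}` is metrizable. Then for every point `x`, the
point `∞` lies in the closure of the compactly connected component of `x`, i.e. of the set
of points joined to `x` by a compact connected subset of `X`. -/
theorem infty_mem_closure_compactlyConnectedComponent {X : Type*} [MetricSpace X]
    [ConnectedSpace X] [LocallyCompactSpace X] (hnc : ¬ CompactSpace X)
    [TopologicalSpace.MetrizableSpace (OnePoint X)] (x : X) :
    (OnePoint.infty : OnePoint X) ∈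
      closure (OnePoint.some ''
        {y : X | ∃ K : Set X, IsCompact K ∧ IsConnected K ∧ x ∈ K ∧ y ∈ K}) := by
  set S : Set X := {y : X | ∃ K : Set X, IsCompact K ∧ IsConnected K ∧ x ∈ K ∧ y ∈ K} with hSdef
  by_contra h
  have hxS : x ∈ S := ⟨{x}, isCompact_singleton, isConnected_singleton, rfl, rfl⟩
  -- S is preconnected
  have hSeq : S = ⋃₀ {K : Set X | IsCompact K ∧ IsConnected K ∧ x ∈ K} := by
    ext y
    simp only [hSdef, mem_setOf_eq, mem_sUnion]
    tauto
  have hSpre : IsPreconnected S := by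
    rw [hSeq]
    exact isPreconnected_sUnion x _ (fun s hs => hs.2.2) (fun s hs => hs.2.1.isPreconnected)
  -- from h, S is contained in a compact set
  have hUopen : IsOpen (closure (OnePoint.some '' S))ᶜ := isClosed_closure.isOpen_compl
  have hKcomp : IsCompact ((OnePoint.some : X → OnePoint X) ⁻¹' closure (OnePoint.some '' S)) := by
    have := ((OnePoint.isOpen_iff_of_mem' (mem_compl h)).1 hUopen).1
    rwa [preimage_compl, compl_compl] at this
  have hSsub : S ⊆ (OnePoint.some : X → OnePoint X) ⁻¹' closure (OnePoint.some '' S) :=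
    fun y hy => subset_closure (mem_image_of_mem _ hy)
  have hclS : IsCompact (closure S) :=
    hKcomp.of_isClosed_subset isClosed_closure
      (closure_minimal hSsub (isClosed_closure.preimage OnePoint.continuous_coe))
  have hclS_conn : IsConnected (closure S) := ⟨⟨x, subset_closure hxS⟩, hSpre.closure⟩
  have hScl : closure S ⊆ S := fun y hy => ⟨closure S, hclS, hclS_conn, subset_closure hxS, hy⟩
  have hSC : S = closure S := Subset.antisymm subset_closure hScl
  have hScomp : IsCompact S := hSC ▸ hclS
  -- take a compact superset L with S ⊆ interior L
  obtain ⟨L, hL, hSL⟩ := exists_compact_superset hScomp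
  haveI : CompactSpace L := isCompact_iff_compactSpace.1 hL
  set x' : L := ⟨x, interior_subset (hSL hxS)⟩ with hx'
  set F : Set L := Subtype.val ⁻¹' (interior L)ᶜ with hF
  have hFcl : IsClosed F := isOpen_interior.isClosed_compl.preimage continuous_subtype_val
  have hdisj : Disjoint (connectedComponent x') F := by
    rw [disjoint_left]
    intro z hz hzF
    have hCcomp : IsCompact (Subtype.val '' connectedComponent x') :=
      (isClosed_connectedComponent.isCompact).image continuous_subtype_val
    have hCconn : IsConnected (Subtype.val '' connectedComponent x') :=
      (isConnected_connectedComponent.image _ continuous_subtype_val.continuousOn)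
    have hzS : (z : X) ∈ S :=
      ⟨_, hCcomp, hCconn, ⟨x', mem_connectedComponent, rfl⟩, ⟨z, hz, rfl⟩⟩
    exact hzF (hSL hzS)
  obtain ⟨A, hA, hxA, hAF⟩ := exists_isClopen_disjoint_of_closed x' hFcl hdisj
  -- push A down to X
  set B : Set X := Subtype.val '' A with hB
  have hBint : B ⊆ interior L := by
    rintro _ ⟨z, hz, rfl⟩
    by_contra hzc
    exact (disjoint_left.1 hAF hz) hzc
  have hBcomp : IsCompact B := (hA.1.isCompact).image continuous_subtype_val
  have hBopen : IsOpen B := by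
    obtain ⟨V, hV, hAV⟩ := isOpen_induced_iff.1 hA.2
    have hBV : B = V ∩ L := by
      rw [hB, ← hAV, Subtype.image_preimage_coe]
      exact (inter_comm _ _)
    have : B = V ∩ interior L := by
      apply Subset.antisymm
      · exact subset_inter (hBV ▸ inter_subset_left) hBint
      · rw [hBV]; exact inter_subset_inter_right _ interior_subset
    rw [this]
    exact hV.inter isOpen_interior
  have hclopen : IsClopen B := ⟨hBcomp.isClosed, hBopen⟩
  rcases isClopen_iff.1 hclopen with h0 | h1
  · exact absurd h0 (Nonempty.ne_empty ⟨x, ⟨x', hxA, rfl⟩⟩)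
  · exact hnc (isCompact_univ_iff.1 (h1 ▸ hBcomp))
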